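/- Let M be a finite set, k ≥ 1, and let L_k denote the set of products ∏_{f ∈ S} f over k-element subsets S of M (elements of a commutative monoid indexed by M). If S and S' are two distinct k-element subsets of M, then the product (∏_{f ∈ S} f)·(∏_{f ∈ S'} f) is divisible by ∏_{f ∈ T} f for some (k+1)-element subset T of M. -/
import Mathlib


theorem product_of_distinct_subsets_divisible {ι α : Type*} [CommMonoid α] [DecidableEq ι]
    (M : Finset ι) (g : ι → α) (k : ℕ) (hk : 1 ≤ k)
    (S S' : Finset ι) (hS : S ⊆ M) (hS' : S' ⊆ M)
    (hcS : S.card = k) (hcS' : S'.card = k) (hne : S ≠ S') :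
    ∃ T ⊆ M, T.card = k + 1 ∧ (∏ f ∈ T, g f) ∣ (∏ f ∈ S, g f) * ∏ f ∈ S', g f := by
  have hdiff : (S' \ S).Nonempty := by
    rw [Finset.sdiff_nonempty]
    intro hsub
    exact hne ((Finset.eq_of_subset_of_card_le hsub (by omega)).symm)
  obtain ⟨x, hx⟩ := hdiff
  rw [Finset.mem_sdiff] at hx
  refine ⟨insert x S, ?_, ?_, ?_⟩
  · exact Finset.insert_subset (hS' hx.1) hS
  · rw [Finset.card_insert_of_notMem hx.2, hcS]
  · rw [Finset.prod_insert hx.2, mul_comm]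
    exact mul_dvd_mul dvd_rfl (Finset.dvd_prod_of_mem g hx.1)
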